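/- Suppose a convex set C ⊆ ℝⁿ is the solution set of m convex quadratic inequalities with facial dimension signature I, where n = max I. Then there exist integers d₁ ≥ d₂ ≥ ⋯ ≥ d_m in {0,…,n−1} such that I ⊆ {n} ∪ ⋃_{k=1}^m [max{0, Σ_{j=1}^k d_j − (k−1)n}, d_k] ∩ ℤ. -/

import Mathlib

open Set Metric RealInnerProductSpace

variable {E : Type*} [NormedAddCommGroup E] [NormedSpace ℝ E]

/-- A face of a convex set: a convex subset `F` of `C` such that any open segment of `C`
meeting `F` has both endpoints in `F`. -/
def IsFace (C F : Set E) : Prop := Convex ℝ F ∧ IsExtreme ℝ C F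

/-- Dimension of a convex set: the dimension of its affine hull. -/
noncomputable def sdim (S : Set E) : ℕ := Module.finrank ℝ (affineSpan ℝ S).direction

/-- The facial dimension signature: the set of dimensions of nonempty faces. -/
def faceDimSig (C : Set E) : Set ℕ :=
  {d | ∃ F : Set E, IsFace C F ∧ F.Nonempty ∧ sdim F = d}

/-- The minimal face of `C` containing `x`. -/
def minFace (C : Set E) (x : E) : Set E := ⋂₀ {F | IsFace C F ∧ x ∈ F}

/-- `S` is the solution set of `k` convex quadratic inequalities. -/
def QuadRep {N : ℕ} (S : Set (EuclideanSpace ℝ (Fin N))) (k : ℕ) : Prop :=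
  ∃ (Q : Fin k → (EuclideanSpace ℝ (Fin N) →ₗ[ℝ] EuclideanSpace ℝ (Fin N)))
    (a : Fin k → EuclideanSpace ℝ (Fin N)) (α : Fin k → ℝ),
    (∀ j x, (0 : ℝ) ≤ ⟪Q j x, x⟫) ∧
    (∀ j x y, ⟪Q j x, y⟫ = ⟪x, Q j y⟫) ∧
    S = {x | ∀ j, ⟪Q j x, x⟫ + 2 * ⟪a j, x⟫ + α j ≤ 0}


open Module

/-- Abbreviation for Euclidean space. -/
abbrev Euc (N : ℕ) := EuclideanSpace ℝ (Fin N)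

section QuadFace
variable {N : ℕ}

lemma psd_apply_eq_zero (Q : (Euc N) →ₗ[ℝ] (Euc N)) (hpsd : ∀ x, (0:ℝ) ≤ ⟪Q x, x⟫)
    (hsym : ∀ x y, ⟪Q x, y⟫ = ⟪x, Q y⟫) {v : (Euc N)} (hv : ⟪Q v, v⟫ = 0) : Q v = 0 := by
  have key : ∀ w : (Euc N), ⟪Q v, w⟫ = 0 := by
    intro w
    set s : ℝ := ⟪Q v, w⟫ with hs
    set c : ℝ := ⟪Q w, w⟫ with hc
    have hc0 : 0 ≤ c := hpsd w
    by_contra hne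
    have hc1 : (0:ℝ) < c + 1 := by linarith
    set t : ℝ := -s / (c + 1) with ht
    have hexp : ⟪Q (v + t • w), v + t • w⟫ = 2 * t * s + t ^ 2 * c := by
      have h1 : ⟪Q w, v⟫ = s := by
        rw [hsym w v]; exact real_inner_comm _ _
      simp only [map_add, map_smul, inner_add_left, inner_add_right, inner_smul_left,
        inner_smul_right, RCLike.ofReal_real_eq_id, id_eq, starRingEnd_apply, star_trivial]
      rw [hv, h1, ← hs, ← hc]; ring
    have h0 := hpsd (v + t • w)
    rw [hexp] at h0
    have h2 : 0 ≤ (2 * t * s + t ^ 2 * c) * (c + 1) ^ 2 :=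
      mul_nonneg h0 (by positivity)
    have h3 : (2 * t * s + t ^ 2 * c) * (c + 1) ^ 2 = -2 * s ^ 2 * (c + 1) + s ^ 2 * c := by
      rw [ht]; field_simp
    rw [h3] at h2
    have : (0:ℝ) < s ^ 2 := by positivity
    nlinarith
  have := key (Q v)
  rwa [real_inner_self_eq_norm_sq, pow_eq_zero_iff, norm_eq_zero] at this
  norm_num
end QuadFace

section QuadFace2
variable {N : ℕ}

/-- The quadratic function of one constraint. -/
noncomputable def qfun (Q : (Euc N) →ₗ[ℝ] (Euc N)) (a : (Euc N)) (α : ℝ) (x : (Euc N)) : ℝ :=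
  ⟪Q x, x⟫ + 2 * ⟪a, x⟫ + α

lemma qfun_midpoint (Q : (Euc N) →ₗ[ℝ] (Euc N)) (hsym : ∀ x y, ⟪Q x, y⟫ = ⟪x, Q y⟫) (a : (Euc N)) (α : ℝ)
    (y z : (Euc N)) :
    qfun Q a α ((1/2 : ℝ) • y + (1/2 : ℝ) • z)
      = (qfun Q a α y + qfun Q a α z) / 2 - ⟪Q (y - z), y - z⟫ / 4 := by
  have h1 : ⟪Q z, y⟫ = ⟪Q y, z⟫ := by rw [hsym z y]; exact real_inner_comm _ _
  simp only [qfun, map_add, map_smul, map_sub, inner_add_left, inner_add_right,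
    inner_smul_left, inner_smul_right, inner_sub_left, inner_sub_right,
    RCLike.ofReal_real_eq_id, id_eq, starRingEnd_apply, star_trivial]
  rw [h1]; ring

lemma qfun_add_smul (Q : (Euc N) →ₗ[ℝ] (Euc N)) (hsym : ∀ x y, ⟪Q x, y⟫ = ⟪x, Q y⟫) (a : (Euc N)) (α : ℝ)
    (x v : (Euc N)) (hQv : Q v = 0) (hav : ⟪a, v⟫ = 0) (t : ℝ) :
    qfun Q a α (x + t • v) = qfun Q a α x := by
  have h1 : ⟪Q x, v⟫ = 0 := by rw [hsym x v, hQv, inner_zero_right]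
  have h2 : ⟪Q v, x⟫ = 0 := by rw [hQv, inner_zero_left]
  simp only [qfun, map_add, map_smul, inner_add_left, inner_add_right,
    inner_smul_left, inner_smul_right, RCLike.ofReal_real_eq_id, id_eq,
    starRingEnd_apply, star_trivial, hQv, h1, h2, hav, inner_zero_left, inner_zero_right]
  ring

lemma qfun_continuous (Q : (Euc N) →ₗ[ℝ] (Euc N)) (a : (Euc N)) (α : ℝ) : Continuous (qfun Q a α) := by
  unfold qfun
  exact (((Q.continuous_of_finiteDimensional.inner continuous_id)).add
    (continuous_const.mul (continuous_const.inner continuous_id))).add continuous_const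

end QuadFace2

section FaceLemmas
variable {N m : ℕ}
/-- The common direction subspace of the faces of one quadratic constraint. -/
noncomputable def Ksub (Q : Fin m → ((Euc N) →ₗ[ℝ] (Euc N))) (a : Fin m → (Euc N)) (j : Fin m) :
    Submodule ℝ (Euc N) :=
  LinearMap.ker (Q j) ⊓ (ℝ ∙ (a j))ᗮ

lemma mem_Ksub {Q : Fin m → ((Euc N) →ₗ[ℝ] (Euc N))} {a : Fin m → (Euc N)} {j : Fin m} {v : (Euc N)} :
    v ∈ Ksub Q a j ↔ Q j v = 0 ∧ ⟪a j, v⟫ = 0 := by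
  rw [Ksub, Submodule.mem_inf, LinearMap.mem_ker,
    Submodule.mem_orthogonal_singleton_iff_inner_right]

variable {Q : Fin m → ((Euc N) →ₗ[ℝ] (Euc N))} {a : Fin m → (Euc N)} {α : Fin m → ℝ}
variable (hpsd : ∀ (j : Fin m) (x : Euc N), (0:ℝ) ≤ ⟪Q j x, x⟫)
variable (hsym : ∀ (j : Fin m) (x y : Euc N), ⟪Q j x, y⟫ = ⟪x, Q j y⟫)
variable {C F : Set (Euc N)}
variable (hCeq : C = {x | ∀ j, qfun (Q j) (a j) (α j) x ≤ 0})
variable (hconv : Convex ℝ F) (hext : IsExtreme ℝ C F)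

include hCeq hext in
lemma qfun_nonpos_of_memF {y : (Euc N)} (hy : y ∈ F) (j : Fin m) :
    qfun (Q j) (a j) (α j) y ≤ 0 := by
  have := hext.1 hy
  rw [hCeq] at this
  exact this j

include hpsd hsym hCeq hconv hext in
/-- Upper bound: differences of points of a face lie in `Ksub` of each constraint that
vanishes identically on the face. -/
lemma sub_mem_Ksub {j : Fin m} (hzero : ∀ y ∈ F, qfun (Q j) (a j) (α j) y = 0)
    {y z : (Euc N)} (hy : y ∈ F) (hz : z ∈ F) : y - z ∈ Ksub Q a j := by
  have hmidF : (1/2 : ℝ) • y + (1/2 : ℝ) • z ∈ F :=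
    hconv hy hz (by norm_num) (by norm_num) (by norm_num)
  have hmid := hzero _ hmidF
  rw [qfun_midpoint (Q j) (hsym j) (a j) (α j) y z, hzero y hy, hzero z hz] at hmid
  have hQ0 : ⟪Q j (y - z), y - z⟫ = 0 := by linarith
  have hQyz : Q j (y - z) = 0 := psd_apply_eq_zero (Q j) (hpsd j) (hsym j) hQ0
  have hQeq : Q j y = Q j z := by
    have := hQyz; rw [map_sub, sub_eq_zero] at this; exact this
  have hyy : ⟪Q j y, y⟫ = ⟪Q j z, z⟫ := by
    calc ⟪Q j y, y⟫ = ⟪Q j z, y⟫ := by rw [hQeq]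
    _ = ⟪z, Q j y⟫ := by rw [hsym j z y]
    _ = ⟪z, Q j z⟫ := by rw [hQeq]
    _ = ⟪Q j z, z⟫ := real_inner_comm _ _
  have hsub : (2:ℝ) * ⟪a j, y - z⟫ = 0 := by
    have h1 := hzero y hy
    have h2 := hzero z hz
    simp only [qfun] at h1 h2
    rw [inner_sub_right]; linarith
  rw [mem_Ksub]
  constructor
  · exact hQyz
  · linarith

include hpsd hsym hCeq hext hconv in
/-- There is a point of the face where all constraints not identically zero on the face
are strictly negative. -/
lemma exists_slater_point (hFne : F.Nonempty) :
    ∃ x ∈ F, ∀ j : Fin m, (∀ y ∈ F, qfun (Q j) (a j) (α j) y = 0) ∨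
      qfun (Q j) (a j) (α j) x < 0 := by
  classical
  suffices h : ∀ s : Finset (Fin m), ∃ x ∈ F, ∀ j ∈ s,
      (∀ y ∈ F, qfun (Q j) (a j) (α j) y = 0) ∨ qfun (Q j) (a j) (α j) x < 0 by
    obtain ⟨x, hx, hx2⟩ := h Finset.univ
    exact ⟨x, hx, fun j => hx2 j (Finset.mem_univ j)⟩
  intro s
  induction s using Finset.induction_on with
  | empty => obtain ⟨x, hx⟩ := hFne; exact ⟨x, hx, by simp⟩
  | @insert j s hj ih =>
    obtain ⟨x, hxF, hx⟩ := ih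
    by_cases hz : ∀ y ∈ F, qfun (Q j) (a j) (α j) y = 0
    · exact ⟨x, hxF, fun j' hj' => by
        rcases Finset.mem_insert.1 hj' with h | h
        · exact h ▸ Or.inl hz
        · exact hx j' h⟩
    · push_neg at hz
      obtain ⟨y, hyF, hy⟩ := hz
      have hylt : qfun (Q j) (a j) (α j) y < 0 :=
        lt_of_le_of_ne (qfun_nonpos_of_memF hCeq hext hyF j) hy
      refine ⟨(1/2 : ℝ) • x + (1/2 : ℝ) • y,
        hconv hxF hyF (by norm_num) (by norm_num) (by norm_num), ?_⟩
      intro j' hj'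
      have hble : ∀ j'' : Fin m, qfun (Q j'') (a j'') (α j'') ((1/2 : ℝ) • x + (1/2 : ℝ) • y)
          ≤ (qfun (Q j'') (a j'') (α j'') x + qfun (Q j'') (a j'') (α j'') y) / 2 := by
        intro j''
        rw [qfun_midpoint (Q j'') (hsym j'') (a j'') (α j'') x y]
        have := hpsd j'' (x - y)
        linarith
      rcases Finset.mem_insert.1 hj' with h | h
      · subst h
        right
        have hxle := qfun_nonpos_of_memF hCeq hext hxF j'
        have := hble j'
        linarith
      · rcases hx j' h with hl | hr
        · exact Or.inl hl
        · right
          have hyle := qfun_nonpos_of_memF hCeq hext hyF j'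
          have := hble j'
          linarith

include hpsd hsym hCeq hext hconv in
/-- Lower bound: directions in all relevant `Ksub` belong to the span of the face. -/
lemma Ksub_le_vectorSpan (hFne : F.Nonempty) {v : Euc N}
    (hv : ∀ j : Fin m, (∀ y ∈ F, qfun (Q j) (a j) (α j) y = 0) →
      (Q j v = 0 ∧ ⟪a j, v⟫ = 0)) :
    v ∈ vectorSpan ℝ F := by
  classical
  obtain ⟨x, hxF, hx⟩ := exists_slater_point hpsd hsym hCeq hconv hext hFne
  have hev : ∀ᶠ t in nhds (0:ℝ), ∀ j : Fin m,
      ¬(∀ y ∈ F, qfun (Q j) (a j) (α j) y = 0) →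
      (qfun (Q j) (a j) (α j) (x + t • v) < 0 ∧ qfun (Q j) (a j) (α j) (x - t • v) < 0) := by
    rw [Filter.eventually_all]
    intro j
    by_cases hz : ∀ y ∈ F, qfun (Q j) (a j) (α j) y = 0
    · filter_upwards with t ht; exact absurd hz ht
    · have hxlt : qfun (Q j) (a j) (α j) x < 0 := (hx j).resolve_left hz
      have hcont : Continuous fun t : ℝ => qfun (Q j) (a j) (α j) (x + t • v) :=
        (qfun_continuous (Q j) (a j) (α j)).comp
          (continuous_const.add (continuous_id.smul continuous_const))
      have hcont2 : Continuous fun t : ℝ => qfun (Q j) (a j) (α j) (x - t • v) :=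
        (qfun_continuous (Q j) (a j) (α j)).comp
          (continuous_const.sub (continuous_id.smul continuous_const))
      have h1 : Filter.Tendsto (fun t : ℝ => qfun (Q j) (a j) (α j) (x + t • v))
          (nhds 0) (nhds (qfun (Q j) (a j) (α j) x)) := by
        have := hcont.tendsto 0
        simpa using this
      have h2 : Filter.Tendsto (fun t : ℝ => qfun (Q j) (a j) (α j) (x - t • v))
          (nhds 0) (nhds (qfun (Q j) (a j) (α j) x)) := by
        have := hcont2.tendsto 0
        simpa using this
      filter_upwards [h1.eventually_lt_const hxlt, h2.eventually_lt_const hxlt] with t u1 u2 _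
      exact ⟨u1, u2⟩
  have hev' : ∀ᶠ t in nhdsWithin (0:ℝ) {(0:ℝ)}ᶜ, (∀ j : Fin m,
      ¬(∀ y ∈ F, qfun (Q j) (a j) (α j) y = 0) →
      (qfun (Q j) (a j) (α j) (x + t • v) < 0 ∧ qfun (Q j) (a j) (α j) (x - t • v) < 0))
      ∧ t ≠ 0 :=
    (hev.filter_mono nhdsWithin_le_nhds).and eventually_mem_nhdsWithin
  obtain ⟨t, ht, htne⟩ := hev'.exists
  have hmem : ∀ w : Euc N, (∀ j : Fin m,
      (¬(∀ y ∈ F, qfun (Q j) (a j) (α j) y = 0) → qfun (Q j) (a j) (α j) w < 0) ∧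
      ((∀ y ∈ F, qfun (Q j) (a j) (α j) y = 0) → qfun (Q j) (a j) (α j) w = 0)) → w ∈ C := by
    intro w hw
    rw [hCeq]
    intro j
    by_cases hz : ∀ y ∈ F, qfun (Q j) (a j) (α j) y = 0
    · exact le_of_eq ((hw j).2 hz)
    · exact le_of_lt ((hw j).1 hz)
  have hplus : x + t • v ∈ C := by
    apply hmem
    intro j
    constructor
    · exact fun hz => (ht j hz).1
    · intro hz
      rw [qfun_add_smul (Q j) (hsym j) (a j) (α j) x v (hv j hz).1 (hv j hz).2 t]
      exact hz x hxF
  have hminus : x - t • v ∈ C := by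
    apply hmem
    intro j
    constructor
    · exact fun hz => (ht j hz).2
    · intro hz
      have : x - t • v = x + (-t) • v := by module
      rw [this, qfun_add_smul (Q j) (hsym j) (a j) (α j) x v (hv j hz).1 (hv j hz).2 (-t)]
      exact hz x hxF
  have hseg : x ∈ openSegment ℝ (x - t • v) (x + t • v) := by
    refine ⟨1/2, 1/2, by norm_num, by norm_num, by norm_num, ?_⟩
    module
  have hpF : x + t • v ∈ F := hext.2 hplus hminus hxF (by rwa [openSegment_symm])
  have hsub : (x + t • v) -ᵥ x ∈ vectorSpan ℝ F := vsub_mem_vectorSpan ℝ hpF hxF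
  have : (x + t • v) -ᵥ x = t • v := by
    simp [vsub_eq_sub]
  rw [this] at hsub
  have := (vectorSpan ℝ F).smul_mem t⁻¹ hsub
  rwa [inv_smul_smul₀ htne] at this

/-- Dimension lower bound for a finite intersection of subspaces. -/
lemma finrank_inf_ge {ι : Type*} (W : Type*) [NormedAddCommGroup W] [NormedSpace ℝ W]
    [FiniteDimensional ℝ W] (K : ι → Submodule ℝ W) (s : Finset ι) (hs : s.Nonempty) :
    (∑ j ∈ s, (finrank ℝ (K j) : ℤ)) - ((s.card : ℤ) - 1) * (finrank ℝ W)
      ≤ (finrank ℝ ↥(s.inf K) : ℤ) := by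
  induction hs using Finset.Nonempty.cons_induction with
  | singleton j =>
    rw [Finset.inf_singleton]
    simp
  | cons j s hj hs ih =>
    rw [Finset.inf_cons, Finset.sum_cons, Finset.card_cons]
    have h1 : (finrank ℝ ↥(K j ⊓ s.inf K) : ℤ)
        = (finrank ℝ (K j) : ℤ) + (finrank ℝ ↥(s.inf K) : ℤ)
          - (finrank ℝ ↥(K j ⊔ s.inf K) : ℤ) := by
      have := Submodule.finrank_sup_add_finrank_inf_eq (K j) (s.inf K)
      push_cast [← this]
      omega
    have h2 : (finrank ℝ ↥(K j ⊔ s.inf K) : ℤ) ≤ (finrank ℝ W : ℤ) := by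
      exact_mod_cast Submodule.finrank_le _
    push_cast
    push_cast at ih
    have hb : ((s.card:ℤ) + 1 - 1) * (finrank ℝ W : ℤ)
        = ((s.card:ℤ) - 1) * (finrank ℝ W : ℤ) + (finrank ℝ W : ℤ) := by ring
    rw [hb]
    linarith [ih, h1, h2]

/-- The combinatorial covering lemma. -/
lemma comb_lemma {m n : ℕ} (e : Fin m → ℕ) (σ : Equiv.Perm (Fin m))
    (he : ∀ j, e j < n) (A : Finset (Fin m)) (hA : A.Nonempty)
    (i : ℕ) (hle : ∀ j ∈ A, i ≤ e j)
    (hge : (∑ j ∈ A, (e j : ℤ)) - ((A.card : ℤ) - 1) * n ≤ (i : ℤ)) :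
    ∃ k : Fin m, (∑ j ∈ Finset.Iic k, (e (σ (Fin.rev j)) : ℤ)) - (k : ℕ) * n ≤ (i : ℤ)
      ∧ i ≤ e (σ (Fin.rev k)) := by
  classical
  have hP : (A.image σ.symm).Nonempty := hA.image _
  set P : Finset (Fin m) := A.image σ.symm with hPdef
  set j₀ : Fin m := P.min' hP with hj₀
  have hmem1 : ∀ j : Fin m, j ∈ Finset.Iic (Fin.rev j₀) → Fin.rev j ∈ Finset.Ici j₀ := by
    intro j hj
    rw [Finset.mem_Iic] at hj
    rw [Finset.mem_Ici]
    have := Fin.rev_le_rev.2 hj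
    rwa [Fin.rev_rev] at this
  have hmem2 : ∀ j : Fin m, j ∈ Finset.Ici j₀ → Fin.rev j ∈ Finset.Iic (Fin.rev j₀) := by
    intro j hj
    rw [Finset.mem_Ici] at hj
    rw [Finset.mem_Iic]
    exact Fin.rev_le_rev.2 hj
  have hupper : i ≤ e (σ (Fin.rev (Fin.rev j₀))) := by
    rw [Fin.rev_rev]
    have hj₀P : j₀ ∈ P := P.min'_mem hP
    obtain ⟨j', hj'A, hj'⟩ := Finset.mem_image.1 hj₀P
    have hσ : σ j₀ = j' := by rw [← hj']; simp
    rw [hσ]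
    exact hle j' hj'A
  refine ⟨Fin.rev j₀, ?_, hupper⟩
  have hsum : ∑ j ∈ Finset.Iic (Fin.rev j₀), (e (σ (Fin.rev j)) : ℤ)
      = ∑ j ∈ Finset.Ici j₀, (e (σ j) : ℤ) := by
    refine Finset.sum_nbij' (fun j => Fin.rev j) (fun j => Fin.rev j)
      hmem1 hmem2 (fun j _ => Fin.rev_rev j) (fun j _ => Fin.rev_rev j) (fun j _ => rfl)
  rw [hsum]
  have hPsub : P ⊆ Finset.Ici j₀ := fun j hj => Finset.mem_Ici.2 (P.min'_le j hj)
  have hsplit : ∑ j ∈ Finset.Ici j₀ \ P, (e (σ j) : ℤ) + ∑ j ∈ P, (e (σ j) : ℤ)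
      = ∑ j ∈ Finset.Ici j₀, (e (σ j) : ℤ) := Finset.sum_sdiff hPsub
  have hPsum : ∑ j ∈ P, (e (σ j) : ℤ) = ∑ j ∈ A, (e j : ℤ) := by
    rw [hPdef, Finset.sum_image (fun x _ y _ h => σ.symm.injective h)]
    simp
  have hrest : ∑ j ∈ Finset.Ici j₀ \ P, (e (σ j) : ℤ)
      ≤ ((Finset.Ici j₀ \ P).card : ℤ) * ((n : ℤ) - 1) := by
    calc ∑ j ∈ Finset.Ici j₀ \ P, (e (σ j) : ℤ)
        ≤ ∑ _j ∈ Finset.Ici j₀ \ P, ((n : ℤ) - 1) := by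
          refine Finset.sum_le_sum fun j _ => ?_
          have := he (σ j); omega
      _ = ((Finset.Ici j₀ \ P).card : ℤ) * ((n : ℤ) - 1) := by
          rw [Finset.sum_const, nsmul_eq_mul]
  have hcard1 : (Finset.Ici j₀).card = ((Fin.rev j₀ : ℕ) + 1 : ℕ) := by
    have hbij : (Finset.Iic (Fin.rev j₀)).card = (Finset.Ici j₀).card :=
      Finset.card_nbij' (fun j => Fin.rev j) (fun j => Fin.rev j)
        hmem1 hmem2 (fun j _ => Fin.rev_rev j) (fun j _ => Fin.rev_rev j)
    rw [← hbij, Fin.card_Iic]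
  have hcardP : P.card = A.card := Finset.card_image_of_injective _ σ.symm.injective
  have hcardle : P.card ≤ (Finset.Ici j₀).card := Finset.card_le_card hPsub
  have hcardsd : (Finset.Ici j₀ \ P).card = (Finset.Ici j₀).card - P.card :=
    Finset.card_sdiff_of_subset hPsub
  have hn1 : 1 ≤ (n:ℤ) := by have := he j₀; omega
  have hA1 : 1 ≤ A.card := hA.card_pos
  have hcards : ((Finset.Ici j₀ \ P).card : ℤ) = ((Fin.rev j₀ : ℕ) : ℤ) + 1 - A.card := by
    rw [hcardsd, Nat.cast_sub hcardle, hcard1, hcardP]; push_cast; ring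
  rw [← hsplit, hPsum]
  have hnonneg : (0:ℤ) ≤ ((Fin.rev j₀ : ℕ) : ℤ) + 1 - A.card := by
    rw [← hcards]; positivity
  nlinarith [hrest, hge]

open Module in
theorem lower_bound {n m : ℕ} (C : Set (EuclideanSpace ℝ (Fin n))) (hC : Convex ℝ C)
    (hrep : QuadRep C m) (hmax : n ∈ faceDimSig C) (hub : ∀ i ∈ faceDimSig C, i ≤ n) :
    ∃ d : Fin m → ℕ, Antitone d ∧ (∀ k, d k ≤ n - 1) ∧
      faceDimSig C ⊆ {n} ∪ ⋃ k : Fin m,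
        {i : ℕ | (∑ j ∈ Finset.Iic k, (d j : ℤ)) - (k : ℕ) * n ≤ (i : ℤ) ∧ i ≤ d k} := by
  classical
  obtain ⟨Q, a, α, hpsd, hsym, hCset⟩ := hrep
  have hCeq : C = {x | ∀ j, qfun (Q j) (a j) (α j) x ≤ 0} := hCset
  set e : Fin m → ℕ := fun j => if Ksub Q a j = ⊤ then n - 1 else finrank ℝ (Ksub Q a j)
    with he_def
  have he_le : ∀ j, e j ≤ n - 1 := by
    intro j
    by_cases h : Ksub Q a j = ⊤
    · simp [he_def, h]
    · simp only [he_def, if_neg h]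
      have h1 : finrank ℝ (Ksub Q a j) < finrank ℝ (Euc n) :=
        Submodule.finrank_lt h
      rw [finrank_euclideanSpace_fin] at h1
      omega
  set σ := Tuple.sort e with hσ
  refine ⟨fun k => e (σ (Fin.rev k)), ?_, ?_, ?_⟩
  · intro k k' hkk'
    exact Tuple.monotone_sort e (Fin.rev_le_rev.2 hkk')
  · intro k; exact he_le _
  · rintro i ⟨F, ⟨hconv, hext⟩, hFne, rfl⟩
    set AF : Finset (Fin m) :=
      Finset.univ.filter
        (fun j => (∀ y ∈ F, qfun (Q j) (a j) (α j) y = 0) ∧ Ksub Q a j ≠ ⊤) with hAF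
    by_cases hAFe : AF = ∅
    · left
      have hspan : vectorSpan ℝ F = ⊤ := by
        rw [eq_top_iff]
        intro v _
        apply Ksub_le_vectorSpan hpsd hsym hCeq hconv hext hFne
        intro j hz
        have hK : Ksub Q a j = ⊤ := by
          by_contra hne
          have hjm : j ∈ AF := by
            rw [hAF, Finset.mem_filter]
            exact ⟨Finset.mem_univ j, hz, hne⟩
          rw [hAFe] at hjm
          exact absurd hjm (Finset.notMem_empty j)
        exact mem_Ksub.1 (hK ▸ Submodule.mem_top)
      show sdim F = n
      rw [sdim, direction_affineSpan, hspan, finrank_top, finrank_euclideanSpace_fin]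
    · right
      have hAFne : AF.Nonempty := Finset.nonempty_of_ne_empty hAFe
      have hWle : ∀ j ∈ AF, vectorSpan ℝ F ≤ Ksub Q a j := by
        intro j hj
        rw [hAF, Finset.mem_filter] at hj
        rw [vectorSpan_def, Submodule.span_le]
        rintro x ⟨y, hy, z, hz, rfl⟩
        exact sub_mem_Ksub hpsd hsym hCeq hconv hext hj.2.1 hy hz
      have hle : ∀ j ∈ AF, sdim F ≤ e j := by
        intro j hj
        have hKne : Ksub Q a j ≠ ⊤ := by
          rw [hAF, Finset.mem_filter] at hj; exact hj.2.2
        rw [sdim, direction_affineSpan, he_def]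
        simp only [if_neg hKne]
        exact Submodule.finrank_mono (hWle j hj)
      have hMle : AF.inf (Ksub Q a) ≤ vectorSpan ℝ F := by
        intro v hv
        apply Ksub_le_vectorSpan hpsd hsym hCeq hconv hext hFne
        intro j hz
        by_cases hK : Ksub Q a j = ⊤
        · exact mem_Ksub.1 (hK ▸ Submodule.mem_top)
        · have hjAF : j ∈ AF := by
            rw [hAF, Finset.mem_filter]
            exact ⟨Finset.mem_univ j, hz, hK⟩
          exact mem_Ksub.1 (Finset.inf_le (f := Ksub Q a) hjAF hv)
      have hrank : (∑ j ∈ AF, (e j : ℤ)) - ((AF.card : ℤ) - 1) * n ≤ (sdim F : ℤ) := by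
        have h1 := finrank_inf_ge (Euc n) (Ksub Q a) AF hAFne
        rw [finrank_euclideanSpace_fin] at h1
        have h2 : finrank ℝ ↥(AF.inf (Ksub Q a)) ≤ sdim F := by
          rw [sdim, direction_affineSpan]
          exact Submodule.finrank_mono hMle
        have h3 : ∑ j ∈ AF, (e j : ℤ) = ∑ j ∈ AF, (finrank ℝ (Ksub Q a j) : ℤ) := by
          refine Finset.sum_congr rfl fun j hj => ?_
          rw [hAF, Finset.mem_filter] at hj
          rw [he_def]; simp [hj.2.2]
        rw [h3]
        exact le_trans h1 (by exact_mod_cast h2)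
      have hn1 : 1 ≤ n := by
        obtain ⟨j, hj⟩ := hAFne
        rw [hAF, Finset.mem_filter] at hj
        have hlt := Submodule.finrank_lt hj.2.2
        rw [finrank_euclideanSpace_fin] at hlt
        omega
      have he_lt : ∀ j, e j < n := fun j => lt_of_le_of_lt (he_le j) (by omega)
      obtain ⟨k, hk1, hk2⟩ := comb_lemma e σ he_lt AF hAFne (sdim F) hle hrank
      exact Set.mem_iUnion.2 ⟨k, hk1, hk2⟩
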